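/- Let p(t) be the one-parameter family of 2×2 joint distributions with both marginals uniform: p(t) = [[1/4+t, 1/4-t],[1/4-t, 1/4+t]] for t ∈ [0, 1/4). Let τ(p(t)) denote the mutual information (KL divergence of p(t) from the uniform product distribution). If τ(p(t)) = η for t > 0, then (1/(2√2))·√(η/(2η+1)) ≤ t ≤ (1/(2√2))·√η. -/

import Mathlib

open Real Set

lemma mono_aux {f f' : ℝ → ℝ} {x : ℝ} (hx0 : 0 ≤ x)
    (hder : ∀ y ∈ Icc (0:ℝ) x, HasDerivAt f (f' y) y)
    (hnn : ∀ y ∈ Icc (0:ℝ) x, 0 ≤ f' y) :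
    f 0 ≤ f x := by
  have hmono : MonotoneOn f (Icc 0 x) := by
    apply monotoneOn_of_deriv_nonneg (convex_Icc 0 x)
    · exact fun y hy => (hder y hy).continuousAt.continuousWithinAt
    · intro y hy
      rw [interior_Icc] at hy
      exact (hder y (Ioo_subset_Icc_self hy)).differentiableAt.differentiableWithinAt
    · intro y hy
      rw [interior_Icc] at hy
      rw [(hder y (Ioo_subset_Icc_self hy)).deriv]
      exact hnn y (Ioo_subset_Icc_self hy)
  exact hmono (left_mem_Icc.mpr hx0) (right_mem_Icc.mpr hx0) hx0

lemma key1 {x : ℝ} (hx0 : 0 ≤ x) (hx1 : x < 1) :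
    2 * x ≤ Real.log (1 + x) - Real.log (1 - x) := by
  have h := mono_aux (f := fun y => Real.log (1 + y) - Real.log (1 - y) - 2 * y)
    (f' := fun y => 1 / (1 + y) + 1 / (1 - y) - 2) hx0 ?_ ?_
  · simpa using h
  · intro y hy
    have h1 : (0:ℝ) < 1 + y := by have := hy.1; linarith
    have h2 : (0:ℝ) < 1 - y := by have := hy.2; linarith
    have d1 : HasDerivAt (fun y : ℝ => Real.log (1 + y)) (1 / (1 + y)) y := by
      simpa using (HasDerivAt.log ((hasDerivAt_id y).const_add 1) h1.ne')
    have d2 : HasDerivAt (fun y : ℝ => Real.log (1 - y)) (-1 / (1 - y)) y := by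
      simpa using (HasDerivAt.log ((hasDerivAt_id y).const_sub 1) h2.ne')
    have := (d1.sub d2).sub ((hasDerivAt_id y).const_mul 2)
    refine this.congr_deriv ?_
    ring
  · intro y hy
    have h1 : (0:ℝ) < 1 + y := by have := hy.1; linarith
    have h2 : (0:ℝ) < 1 - y := by have := hy.2; linarith
    rw [div_add_div _ _ h1.ne' h2.ne', sub_nonneg, le_div_iff₀ (by positivity)]
    nlinarith [sq_nonneg y]

lemma key2 {x : ℝ} (hx0 : 0 ≤ x) (hx1 : x < 1) :
    Real.log (1 + x) - Real.log (1 - x) ≤ 2 * x / (1 - x ^ 2) := by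
  have h := mono_aux (f := fun y => 2 * y / (1 - y ^ 2) - (Real.log (1 + y) - Real.log (1 - y)))
    (f' := fun y => (2 * (1 - y ^ 2) - 2 * y * (-(2 * y))) / (1 - y ^ 2) ^ 2 - (1 / (1 + y) + 1 / (1 - y)))
    hx0 ?_ ?_
  · simpa using h
  · intro y hy
    have h1 : (0:ℝ) < 1 + y := by have := hy.1; linarith
    have h2 : (0:ℝ) < 1 - y := by have := hy.2; have : y < 1 := lt_of_le_of_lt hy.2 hx1; linarith
    have hsq : (1:ℝ) - y ^ 2 ≠ 0 := by nlinarith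
    have d1 : HasDerivAt (fun y : ℝ => Real.log (1 + y)) (1 / (1 + y)) y := by
      simpa using (HasDerivAt.log ((hasDerivAt_id y).const_add 1) h1.ne')
    have d2 : HasDerivAt (fun y : ℝ => Real.log (1 - y)) (-1 / (1 - y)) y := by
      simpa using (HasDerivAt.log ((hasDerivAt_id y).const_sub 1) h2.ne')
    have dc : HasDerivAt (fun y : ℝ => 2 * y) 2 y := by
      simpa using (hasDerivAt_id y).const_mul 2
    have dd : HasDerivAt (fun y : ℝ => 1 - y ^ 2) (-(2 * y)) y := by
      simpa using ((hasDerivAt_pow 2 y).const_sub 1)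
    have := (dc.div dd hsq).sub (d1.sub d2)
    refine this.congr_deriv ?_
    field_simp
    ring
  · intro y hy
    have h1 : (0:ℝ) < 1 + y := by have := hy.1; linarith
    have hylt : y < 1 := lt_of_le_of_lt hy.2 hx1
    have h2 : (0:ℝ) < 1 - y := by linarith
    have hsq : (0:ℝ) < 1 - y ^ 2 := by nlinarith
    rw [sub_nonneg, div_add_div _ _ h1.ne' h2.ne', div_le_div_iff₀ (by positivity) (by positivity)]
    nlinarith [sq_nonneg y, sq_nonneg (y*y), sq_nonneg (1 - y^2), mul_pos h1 h2]

-- F(x) ≥ x²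
lemma keyA {x : ℝ} (hx0 : 0 ≤ x) (hx1 : x < 1) :
    x ^ 2 ≤ (1 + x) * Real.log (1 + x) + (1 - x) * Real.log (1 - x) := by
  have h := mono_aux
    (f := fun y => (1 + y) * Real.log (1 + y) + (1 - y) * Real.log (1 - y) - y ^ 2)
    (f' := fun y => (Real.log (1 + y) + 1) + (-Real.log (1 - y) - 1) - 2 * y) hx0 ?_ ?_
  · simpa using h
  · intro y hy
    have h1 : (0:ℝ) < 1 + y := by have := hy.1; linarith
    have h2 : (0:ℝ) < 1 - y := by have : y < 1 := lt_of_le_of_lt hy.2 hx1; linarith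
    have d1 : HasDerivAt (fun y : ℝ => Real.log (1 + y)) (1 / (1 + y)) y := by
      simpa using (HasDerivAt.log ((hasDerivAt_id y).const_add 1) h1.ne')
    have d2 : HasDerivAt (fun y : ℝ => Real.log (1 - y)) (-1 / (1 - y)) y := by
      simpa using (HasDerivAt.log ((hasDerivAt_id y).const_sub 1) h2.ne')
    have da : HasDerivAt (fun y : ℝ => 1 + y) 1 y := by
      simpa using (hasDerivAt_id y).const_add 1
    have db : HasDerivAt (fun y : ℝ => 1 - y) (-1) y := by
      simpa using (hasDerivAt_id y).const_sub 1
    have := ((da.mul d1).add (db.mul d2)).sub (hasDerivAt_pow 2 y)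
    refine this.congr_deriv ?_
    field_simp
    ring
  · intro y hy
    have hylt : y < 1 := lt_of_le_of_lt hy.2 hx1
    have := key1 hy.1 hylt
    linarith

-- F(x) ≤ x²/(1-x²),  via  F ≤ 1/(1-x²) - 1
lemma keyB {x : ℝ} (hx0 : 0 ≤ x) (hx1 : x < 1) :
    (1 + x) * Real.log (1 + x) + (1 - x) * Real.log (1 - x) ≤ x ^ 2 / (1 - x ^ 2) := by
  have h := mono_aux
    (f := fun y => (1 - y ^ 2)⁻¹ - ((1 + y) * Real.log (1 + y) + (1 - y) * Real.log (1 - y)))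
    (f' := fun y => 2 * y / (1 - y ^ 2) ^ 2 - ((Real.log (1 + y) + 1) + (-Real.log (1 - y) - 1)))
    hx0 ?_ ?_
  · have hsq : (0:ℝ) < 1 - x ^ 2 := by nlinarith
    norm_num at h
    have heq : x ^ 2 / (1 - x ^ 2) = (1 - x ^ 2)⁻¹ - 1 := by field_simp; ring
    rw [heq]
    linarith
  · intro y hy
    have h1 : (0:ℝ) < 1 + y := by have := hy.1; linarith
    have h2 : (0:ℝ) < 1 - y := by have : y < 1 := lt_of_le_of_lt hy.2 hx1; linarith
    have hsq : (1:ℝ) - y ^ 2 ≠ 0 := by nlinarith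
    have d1 : HasDerivAt (fun y : ℝ => Real.log (1 + y)) (1 / (1 + y)) y := by
      simpa using (HasDerivAt.log ((hasDerivAt_id y).const_add 1) h1.ne')
    have d2 : HasDerivAt (fun y : ℝ => Real.log (1 - y)) (-1 / (1 - y)) y := by
      simpa using (HasDerivAt.log ((hasDerivAt_id y).const_sub 1) h2.ne')
    have da : HasDerivAt (fun y : ℝ => 1 + y) 1 y := by
      simpa using (hasDerivAt_id y).const_add 1
    have db : HasDerivAt (fun y : ℝ => 1 - y) (-1) y := by
      simpa using (hasDerivAt_id y).const_sub 1
    have dd : HasDerivAt (fun y : ℝ => 1 - y ^ 2) (-(2 * y)) y := by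
      simpa using ((hasDerivAt_pow 2 y).const_sub 1)
    have := (dd.inv hsq).sub ((da.mul d1).add (db.mul d2))
    refine this.congr_deriv ?_
    field_simp
    ring
  · intro y hy
    have hylt : y < 1 := lt_of_le_of_lt hy.2 hx1
    have h2 : (0:ℝ) < 1 - y := by linarith
    have hsq : (0:ℝ) < 1 - y ^ 2 := by nlinarith [hy.1]
    have hk := key2 hy.1 hylt
    have hle : 2 * y / (1 - y ^ 2) ≤ 2 * y / (1 - y ^ 2) ^ 2 := by
      apply div_le_div_of_nonneg_left (by linarith [hy.1]) (by positivity)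
      nlinarith
    linarith

theorem stmt_8 (t η : ℝ) (ht : 0 < t) (ht4 : t < 1/4)
    (hτ : 2 * ((1/4 + t) * Real.log ((1/4 + t) / (1/4)))
        + 2 * ((1/4 - t) * Real.log ((1/4 - t) / (1/4))) = η) :
    1 / (2 * Real.sqrt 2) * Real.sqrt (η / (2 * η + 1)) ≤ t ∧
    t ≤ 1 / (2 * Real.sqrt 2) * Real.sqrt η := by
  set x := 4 * t with hx
  have hx0 : 0 ≤ x := by positivity
  have hx1 : x < 1 := by simp [hx]; linarith
  have hlog1 : (1/4 + t) / (1/4) = 1 + x := by field_simp [hx]; ring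
  have hlog2 : (1/4 - t) / (1/4) = 1 - x := by field_simp [hx]; ring
  have hη : η = ((1 + x) * Real.log (1 + x) + (1 - x) * Real.log (1 - x)) / 2 := by
    rw [← hτ, hlog1, hlog2]; ring
  have hA := keyA hx0 hx1
  have hB := keyB hx0 hx1
  have hsq : (0:ℝ) < 1 - x ^ 2 := by nlinarith
  -- η ≥ x²/2 = 8t²
  have h8 : 8 * t ^ 2 ≤ η := by rw [hη]; nlinarith
  have hηpos : 0 < η := by nlinarith
  -- η ≤ (x²/2)(2η+1), i.e. η/(2η+1) ≤ 8t²
  have h9 : η / (2 * η + 1) ≤ 8 * t ^ 2 := by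
    rw [div_le_iff₀ (by linarith)]
    have : η * (1 - x ^ 2) ≤ x ^ 2 / 2 := by
      rw [hη]
      rw [le_div_iff₀ hsq] at hB
      nlinarith
    rw [hx] at this
    nlinarith [this]
  have h2s : Real.sqrt 2 > 0 := Real.sqrt_pos.mpr (by norm_num)
  constructor
  · rw [div_mul_eq_mul_div, one_mul, div_le_iff₀ (by positivity)]
    have : Real.sqrt (η / (2 * η + 1)) ≤ Real.sqrt (8 * t ^ 2) := Real.sqrt_le_sqrt h9
    have h8t : Real.sqrt (8 * t ^ 2) = t * (2 * Real.sqrt 2) := by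
      rw [show (8:ℝ) * t ^ 2 = (t * (2 * Real.sqrt 2)) ^ 2 by
        rw [mul_pow, mul_pow, Real.sq_sqrt (by norm_num : (2:ℝ) ≥ 0)]; ring]
      exact Real.sqrt_sq (by positivity)
    linarith [h8t ▸ this]
  · rw [div_mul_eq_mul_div, one_mul, le_div_iff₀ (by positivity)]
    have : Real.sqrt (8 * t ^ 2) ≤ Real.sqrt η := Real.sqrt_le_sqrt h8
    have h8t : Real.sqrt (8 * t ^ 2) = t * (2 * Real.sqrt 2) := by
      rw [show (8:ℝ) * t ^ 2 = (t * (2 * Real.sqrt 2)) ^ 2 by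
        rw [mul_pow, mul_pow, Real.sq_sqrt (by norm_num : (2:ℝ) ≥ 0)]; ring]
      exact Real.sqrt_sq (by positivity)
    linarith [h8t ▸ this]
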